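/- arXiv:2405.06475 — 2 statements merged into one kernel-verified Lean document; each statement's English description precedes it below -/
import Mathlib

section
/- Let R be a commutative ring and D a karoubian additive R-linear category with weak kernels and weak cokernels. Let S be a full subcategory of D which is closed under weak cokernels and under direct summands. If S is precovering in D, then S is coreflective, i.e. the inclusion functor S → D has a right adjoint. -/
/-!
Statement 4.
Let `R` be a commutative ring and `D` a karoubian additive `R`-linear category with weak
kernels and weak cokernels.  Let `S` be a full subcategory of `D` closed under weak
cokernels and direct summands.  If `S` is precovering, then `S` is coreflective, i.e. the
inclusion `S → D` has a right adjoint.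
-/

open CategoryTheory Opposite

universe w v u

namespace Paper

variable {R : Type w} [CommRing R] {D : Type u} [Category.{v} D] [Preadditive D]
  [CategoryTheory.Linear R D]

/-- `X → Y → Z` is a weak kernel sequence, i.e. `D(-,X) → D(-,Y) → D(-,Z)` is exact. -/
def IsWeakKernelSeq {X Y Z : D} (f : X ⟶ Y) (g : Y ⟶ Z) : Prop :=
  ∀ (W : D) (w : W ⟶ Y), w ≫ g = 0 ↔ ∃ t : W ⟶ X, t ≫ f = w

/-- `X → Y → Z` is a weak cokernel sequence, i.e. `D(Z,W) → D(Y,W) → D(X,W)` is exact for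
every `W`. -/
def IsWeakCokernelSeq {X Y Z : D} (f : X ⟶ Y) (g : Y ⟶ Z) : Prop :=
  ∀ (W : D) (w : Y ⟶ W), f ≫ w = 0 ↔ ∃ t : Z ⟶ W, g ≫ t = w

/-- `D` has weak kernels. -/
def HasWeakKernels (D : Type u) [Category.{v} D] [Preadditive D] : Prop :=
  ∀ ⦃Y Z : D⦄ (g : Y ⟶ Z), ∃ (X : D) (f : X ⟶ Y), IsWeakKernelSeq f g

/-- `D` has weak cokernels. -/
def HasWeakCokernels (D : Type u) [Category.{v} D] [Preadditive D] : Prop :=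
  ∀ ⦃X Y : D⦄ (f : X ⟶ Y), ∃ (Z : D) (g : Y ⟶ Z), IsWeakCokernelSeq f g

theorem pointwise_coreflection
    (hkar : IsIdempotentComplete D)
    (hwk : HasWeakKernels D)
    (S : D → Prop)
    (hcoker : ∀ ⦃X Y : D⦄ (f : X ⟶ Y), S X → S Y →
      ∃ (Z : D) (g : Y ⟶ Z), S Z ∧ IsWeakCokernelSeq f g)
    (hsmd : ∀ ⦃X Y : D⦄, S X → ∀ (s : Y ⟶ X) (r : X ⟶ Y), s ≫ r = 𝟙 Y → S Y)
    (hprecover : ∀ D₀ : D, ∃ (S₀ : D) (_ : S S₀) (p : S₀ ⟶ D₀),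
      ∀ (X : D), S X → ∀ u : X ⟶ D₀, ∃ v : X ⟶ S₀, v ≫ p = u)
    (D₀ : D) :
    ∃ (C : D) (_ : S C) (ε : C ⟶ D₀),
      ∀ (X : D), S X → ∀ u : X ⟶ D₀, ∃! c : X ⟶ C, c ≫ ε = u := by
  obtain ⟨S₁, hS₁, p₁, hp₁⟩ := hprecover D₀
  obtain ⟨K, k, hk⟩ := hwk p₁
  obtain ⟨S₂, hS₂, q, hq⟩ := hprecover K
  set f : S₂ ⟶ S₁ := q ≫ k with hf
  obtain ⟨Z, g, hZ, hg⟩ := hcoker f hS₂ hS₁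
  have hfg : f ≫ g = 0 := (hg Z g).mpr ⟨𝟙 Z, Category.comp_id g⟩
  have hkp : k ≫ p₁ = 0 := ((hk K k).mpr ⟨𝟙 K, Category.id_comp k⟩)
  -- key lemma: for X ∈ S, v ≫ p₁ = 0 implies v ≫ g = 0
  have key : ∀ (X : D), S X → ∀ v : X ⟶ S₁, v ≫ p₁ = 0 → v ≫ g = 0 := by
    intro X hX v hv0
    obtain ⟨t', ht'⟩ := (hk X v).mp hv0
    obtain ⟨v'', hv''⟩ := hq X hX t'
    have : v = v'' ≫ f := by rw [hf, ← Category.assoc, hv'', ht']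
    rw [this, Category.assoc, hfg, Limits.comp_zero]
  have hfp : f ≫ p₁ = 0 := by rw [hf, Category.assoc, hkp, Limits.comp_zero]
  obtain ⟨t, ht⟩ := (hg D₀ p₁).mp hfp
  obtain ⟨h, hh⟩ := hp₁ Z hZ t
  set ε : Z ⟶ Z := h ≫ g with hε
  have hεt : ε ≫ t = t := by rw [hε, Category.assoc, ht, hh]
  have hidem : ε ≫ ε = ε := by
    have h1 : (ε ≫ h - h) ≫ p₁ = 0 := by
      simp only [Preadditive.sub_comp, Category.assoc, hh]
      rw [hεt, sub_self]
    have h2 := key Z hZ _ h1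
    simp only [Preadditive.sub_comp, Category.assoc] at h2
    rw [sub_eq_zero] at h2
    calc ε ≫ ε = ε ≫ h ≫ g := by rw [hε]
    _ = h ≫ g := h2
    _ = ε := hε.symm
  obtain ⟨C, i, e, hie, hei⟩ := hkar.idempotents_split Z ε hidem
  refine ⟨C, hsmd hZ i e hie, i ≫ t, ?_⟩
  intro X hX u
  obtain ⟨v, hv⟩ := hp₁ X hX u
  refine ⟨v ≫ g ≫ e, ?_, ?_⟩
  · have : g ≫ e ≫ i = g ≫ ε := by rw [hei]
    have hgε : g ≫ ε ≫ t = g ≫ t := by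
      rw [hεt]
    calc (v ≫ g ≫ e) ≫ i ≫ t = v ≫ g ≫ (e ≫ i) ≫ t := by simp only [Category.assoc]
    _ = v ≫ g ≫ ε ≫ t := by rw [hei]
    _ = v ≫ g ≫ t := by rw [hεt]
    _ = v ≫ p₁ := by rw [ht]
    _ = u := hv
  · -- uniqueness: suffices injectivity
    intro c hc
    have huniq : ∀ c' : X ⟶ C, c' ≫ i ≫ t = 0 → c' = 0 := by
      intro c' hc'
      have h1 : (c' ≫ i ≫ h) ≫ p₁ = 0 := by
        simp only [Category.assoc, hh]
        simpa only [Category.assoc] using hc'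
      have h2 := key X hX _ h1
      have h3 : c' ≫ i ≫ ε = 0 := by
        simpa only [hε, Category.assoc] using h2
      have h4 : i ≫ ε = i := by rw [← hei, ← Category.assoc, ‹i ≫ e = 𝟙 C›, Category.id_comp]
      rw [h4] at h3
      calc c' = c' ≫ i ≫ e := by rw [hie]; simp
      _ = 0 := by rw [← Category.assoc, h3, Limits.zero_comp]
    have := huniq (c - v ≫ g ≫ e) (by
      simp only [Preadditive.sub_comp, Category.assoc]
      rw [sub_eq_zero]
      rw [hc]
      have : (v ≫ g ≫ e) ≫ i ≫ t = u := by
        calc (v ≫ g ≫ e) ≫ i ≫ t = v ≫ g ≫ (e ≫ i) ≫ t := by simp only [Category.assoc]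
        _ = v ≫ g ≫ ε ≫ t := by rw [hei]
        _ = v ≫ g ≫ t := by rw [hεt]
        _ = v ≫ p₁ := by rw [ht]
        _ = u := hv
      simpa only [Category.assoc] using this.symm)
    rw [sub_eq_zero] at this
    exact this

theorem coreflective_of_precovering
    (hkar : IsIdempotentComplete D)
    (hwk : HasWeakKernels D) (hwc : HasWeakCokernels D)
    (S : D → Prop)
    -- `S` is closed under weak cokernels: a weak cokernel of a morphism of `S` may be
    -- chosen in `S`
    (hcoker : ∀ ⦃X Y : D⦄ (f : X ⟶ Y), S X → S Y →
      ∃ (Z : D) (g : Y ⟶ Z), S Z ∧ IsWeakCokernelSeq f g)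
    -- `S` is closed under direct summands
    (hsmd : ∀ ⦃X Y : D⦄, S X → ∀ (s : Y ⟶ X) (r : X ⟶ Y), s ≫ r = 𝟙 Y → S Y)
    -- `S` is precovering
    (hprecover : ∀ D₀ : D, ∃ (S₀ : D) (_ : S S₀) (p : S₀ ⟶ D₀),
      ∀ (X : D), S X → ∀ u : X ⟶ D₀, ∃ v : X ⟶ S₀, v ≫ p = u) :
    ∃ G : D ⥤ ObjectProperty.FullSubcategory S, Nonempty (ObjectProperty.ι S ⊣ G) := by
  have pw := pointwise_coreflection hkar hwk S hcoker hsmd hprecover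
  choose C hC ε hε using pw
  have hε' : ∀ (Y : D) (X : D), S X → ∀ u : X ⟶ Y,
      ∃ c : X ⟶ C Y, c ≫ ε Y = u ∧ ∀ c' : X ⟶ C Y, c' ≫ ε Y = u → c' = c := by
    intro Y X hX u
    obtain ⟨c, hc, hu⟩ := hε Y X hX u
    exact ⟨c, hc, hu⟩
  choose l hl hu using hε'
  let Gobj : D → ObjectProperty.FullSubcategory S := fun D₀ => ⟨C D₀, hC D₀⟩
  let e : ∀ (X : ObjectProperty.FullSubcategory S) (Y : D),
      ((ObjectProperty.ι S).obj X ⟶ Y) ≃ (X ⟶ Gobj Y) :=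
    fun X Y =>
      { toFun := fun u => ObjectProperty.homMk (l Y X.obj X.property u)
        invFun := fun c => c.hom ≫ ε Y
        left_inv := fun u => hl Y X.obj X.property u
        right_inv := fun c => InducedCategory.hom_ext (hu Y X.obj X.property (c.hom ≫ ε Y) c.hom rfl).symm }
  have he : ∀ (X' X : ObjectProperty.FullSubcategory S) (Y : D) (f : X' ⟶ X)
      (g : (ObjectProperty.ι S).obj X ⟶ Y),
      e X' Y ((ObjectProperty.ι S).map f ≫ g) = f ≫ e X Y g := by
    intro X' X Y f g
    refine InducedCategory.hom_ext ((hu Y X'.obj X'.property ((ObjectProperty.ι S).map f ≫ g)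
      (f ≫ e X Y g).hom ?_)).symm
    show ((ObjectProperty.ι S).map f ≫ l Y X.obj X.property g) ≫ ε Y = _
    rw [Category.assoc, hl Y X.obj X.property g]
  exact ⟨Adjunction.rightAdjointOfEquiv e he,
    ⟨Adjunction.adjunctionOfEquivRight e he⟩⟩

end Paper
end

section
/- Let D be a compactly generated R-linear triangulated category, M a D^c-module, and G a compact object such that M(G) is a finitely generated R-module. Then there exist a compact object D and a natural transformation yD → M which induces a surjective map D(G,D) → M(G). -/
open CategoryTheory CategoryTheory.Limits CategoryTheory.Pretriangulated Opposite

universe w v u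

namespace Paper

section OppositeLinear

variable (R : Type w) [CommRing R] {E : Type*} [Category E] [Preadditive E]
  [CategoryTheory.Linear R E]

instance oppositeHomModule (X Y : Eᵒᵖ) : Module R (X ⟶ Y) where
  smul r f := (r • f.unop).op
  one_smul f := Quiver.Hom.unop_inj (one_smul _ _)
  mul_smul r s f := Quiver.Hom.unop_inj (mul_smul _ _ _)
  smul_zero r := Quiver.Hom.unop_inj (smul_zero _)
  smul_add r f g := Quiver.Hom.unop_inj (smul_add _ _ _)
  add_smul r s f := Quiver.Hom.unop_inj (add_smul _ _ _)
  zero_smul f := Quiver.Hom.unop_inj (zero_smul _ _)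

instance oppositeLinear : CategoryTheory.Linear R Eᵒᵖ where
  smul_comp X Y Z r f g := by
    exact Quiver.Hom.unop_inj (CategoryTheory.Linear.comp_smul _ _ _ g.unop r f.unop)
  comp_smul X Y Z f r g := by
    exact Quiver.Hom.unop_inj (CategoryTheory.Linear.smul_comp _ _ _ r g.unop f.unop)

end OppositeLinear

variable (R : Type w) [CommRing R] (D : Type u) [Category.{v} D] [Preadditive D]
  [CategoryTheory.Linear R D] [HasZeroObject D] [HasShift D ℤ]
  [∀ n : ℤ, (shiftFunctor D n).Additive] [Pretriangulated D]
  [HasCoproducts.{v} D]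

variable {D}

/-- the canonical map `⊕ᵢ D(C, fᵢ) → D(C, ∐ f)` -/
noncomputable def homCoprodMap (C : D) {ι : Type v} (f : ι → D) :
    DirectSum ι (fun i => C ⟶ f i) →+ (C ⟶ ∐ f) :=
  letI := Classical.decEq ι
  DirectSum.toAddMonoid (fun i => AddMonoidHom.mk' (fun u => u ≫ Limits.Sigma.ι f i)
    (fun u v => by simp [Preadditive.add_comp]))

/-- `C` is a compact object: `D(C,-)` commutes with coproducts. -/
def IsCompactObj (C : D) : Prop :=
  ∀ (ι : Type v) (f : ι → D), Function.Bijective (homCoprodMap C f)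

variable (D)

/-- the full subcategory `D^c ⊆ D` of compact objects -/
abbrev Compacts := ObjectProperty.FullSubcategory (fun C : D => IsCompactObj C)

/-- `D` is compactly generated. -/
def CompactlyGenerated : Prop :=
  EssentiallySmall.{v} (Compacts D) ∧
  ∀ X : D, (∀ C : D, IsCompactObj C → ∀ f : C ⟶ X, f = 0) → IsZero X

/-- the restricted Yoneda functor `y : D ⥤ Mod-D^c`, `X ↦ D(-,X)|_{D^c}` -/
noncomputable def ry : D ⥤ ((Compacts D)ᵒᵖ ⥤ ModuleCat.{v} R) :=
  linearYoneda R D ⋙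
    (Functor.whiskeringLeft (Compacts D)ᵒᵖ Dᵒᵖ (ModuleCat.{v} R)).obj
      (ObjectProperty.ι _).op

variable {D}

/-- a triangle is pure if `0 → yX → yY → yZ → 0` is a short exact sequence of
`D^c`-modules -/
def IsPureTriangle (T : Pretriangulated.Triangle D) : Prop :=
  T ∈ (distTriang D) ∧ ∀ C : D, IsCompactObj C →
    (Function.Injective (fun u : C ⟶ T.obj₁ => u ≫ T.mor₁) ∧
     (∀ v : C ⟶ T.obj₂, v ≫ T.mor₂ = 0 ↔ ∃ u : C ⟶ T.obj₁, u ≫ T.mor₁ = v) ∧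
     Function.Surjective (fun v : C ⟶ T.obj₂ => v ≫ T.mor₂))

/-- `P` is pure projective, i.e. `P ∈ Add(D^c)` -/
def IsPureProjective (P : D) : Prop :=
  ∃ (ι : Type v) (f : ι → D) (_ : ∀ i, IsCompactObj (f i))
    (s : P ⟶ ∐ f) (r : (∐ f) ⟶ P), s ≫ r = 𝟙 P

/-- `X` has pure projective dimension at most 1 -/
def PPdimLE1 (X : D) : Prop :=
  ∃ (P₁ P₀ : D) (_ : IsPureProjective P₁) (_ : IsPureProjective P₀)
    (a : P₁ ⟶ P₀) (b : P₀ ⟶ X) (c : X ⟶ P₁⟦(1 : ℤ)⟧),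
    IsPureTriangle (Pretriangulated.Triangle.mk a b c)


variable (D)

/-- the Yoneda functor on compact objects, `D^c ⥤ Mod-D^c` -/
noncomputable def yc : Compacts D ⥤ ((Compacts D)ᵒᵖ ⥤ ModuleCat.{v} R) :=
  ObjectProperty.ι _ ⋙ ry R D

/-- A `D^c`-module is cohomological if it sends (distinguished) triangles of compact
objects to exact sequences. -/
def IsCohomologicalMod (M : (Compacts D)ᵒᵖ ⥤ ModuleCat.{v} R) : Prop :=
  ∀ (X Y Z : Compacts D) (f : X ⟶ Y) (g : Y ⟶ Z) (h : Z.obj ⟶ X.obj⟦(1 : ℤ)⟧),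
    Pretriangulated.Triangle.mk (show X.obj ⟶ Y.obj from f.hom) (show Y.obj ⟶ Z.obj from g.hom) h ∈
      (distTriang D) →
    Function.Exact (M.map g.op) (M.map f.op)

/-- the `D^c`-module `M` is `G`-locally coherent: (LC1) and (LC2) hold -/
def IsLocCoh (M : (Compacts D)ᵒᵖ ⥤ ModuleCat.{v} R) (G : Compacts D) : Prop :=
  -- (LC1)
  (∃ (D₀ : Compacts D) (α : (yc R D).obj D₀ ⟶ M),
     Function.Surjective (α.app (op G))) ∧
  -- (LC2)
  (∀ (D₀ : Compacts D) (β : (yc R D).obj D₀ ⟶ M),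
     ∃ (C₀ : Compacts D) (f : C₀ ⟶ D₀),
       (yc R D).map f ≫ β = 0 ∧
       Function.Exact (((yc R D).map f).app (op G)) (β.app (op G)))

variable {D}

section Aux

instance : HasFiniteCoproducts D :=
  ⟨fun _ => hasColimitsOfShape_of_equivalence (Discrete.equivalence (Equiv.ulift.{v}))⟩

instance : HasFiniteBiproducts D := HasFiniteBiproducts.of_hasFiniteCoproducts

lemma homCoprodMap_of (C : D) {ι : Type v} [DecidableEq ι] (f : ι → D) (i : ι)
    (x : C ⟶ f i) :
    homCoprodMap C f (DirectSum.of (fun i => C ⟶ f i) i x) = x ≫ Limits.Sigma.ι f i := by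
  obtain rfl : ‹DecidableEq ι› = Classical.decEq ι := Subsingleton.elim _ _
  letI := Classical.decEq ι
  simp only [homCoprodMap]
  rw [DirectSum.toAddMonoid_of]
  rfl

/-- precomposition with `g` as an additive map of direct sums -/
noncomputable def dmap {A B : D} (g : B ⟶ A) {ι : Type v} [DecidableEq ι] (f : ι → D) :
    DirectSum ι (fun i => A ⟶ f i) →+ DirectSum ι (fun i => B ⟶ f i) :=
  DirectSum.toAddMonoid (fun i =>
    (DirectSum.of (fun i => B ⟶ f i) i).comp
      (AddMonoidHom.mk' (fun u : A ⟶ f i => g ≫ u) (fun u v => by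
        simp [Preadditive.comp_add])))

lemma dmap_of {A B : D} (g : B ⟶ A) {ι : Type v} [DecidableEq ι] (f : ι → D) (i : ι)
    (x : A ⟶ f i) :
    dmap g f (DirectSum.of (fun i => A ⟶ f i) i x)
      = DirectSum.of (fun i => B ⟶ f i) i (g ≫ x) := by
  obtain rfl : ‹DecidableEq ι› = Classical.decEq ι := Subsingleton.elim _ _
  letI := Classical.decEq ι
  simp only [dmap]
  rw [DirectSum.toAddMonoid_of]
  rfl

lemma homCoprodMap_dmap {A B : D} (g : B ⟶ A) {ι : Type v} [DecidableEq ι] (f : ι → D)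
    (u : DirectSum ι (fun i => A ⟶ f i)) :
    homCoprodMap B f (dmap g f u) = g ≫ homCoprodMap A f u := by
  have h : (homCoprodMap B f).comp (dmap g f)
      = (AddMonoidHom.mk' (fun v : A ⟶ ∐ f => g ≫ v) (fun u v => by
          simp [Preadditive.comp_add])).comp (homCoprodMap A f) := by
    refine DirectSum.addHom_ext (fun i x => ?_)
    simp [dmap_of, homCoprodMap_of]
  exact DFunLike.congr_fun h u

lemma isCompactObj_biproduct {J : Type} [Fintype J] (h : J → D)
    (hc : ∀ j, IsCompactObj (h j)) : IsCompactObj (⨁ h) := by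
  classical
  intro ι f
  letI := Classical.decEq ι
  have key : ∀ w : DirectSum ι (fun i => (⨁ h) ⟶ f i),
      ∑ j : J, dmap (biproduct.π h j) f (dmap (biproduct.ι h j) f w) = w := by
    have h2 : (∑ j : J, (dmap (biproduct.π h j) f).comp (dmap (biproduct.ι h j) f))
        = AddMonoidHom.id _ := by
      refine DirectSum.addHom_ext (fun i x => ?_)
      rw [AddMonoidHom.finset_sum_apply]
      simp only [AddMonoidHom.coe_comp, Function.comp_apply, dmap_of, AddMonoidHom.id_apply]
      rw [← map_sum]
      congr 1
      simp only [← Category.assoc]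
      rw [← Preadditive.sum_comp, biproduct.total, Category.id_comp]
    intro w
    calc ∑ j : J, dmap (biproduct.π h j) f (dmap (biproduct.ι h j) f w)
        = (∑ j : J, (dmap (biproduct.π h j) f).comp (dmap (biproduct.ι h j) f)) w := by
          rw [AddMonoidHom.finset_sum_apply]; rfl
      _ = w := by rw [h2]; rfl
  constructor
  · intro u v huv
    have hj : ∀ j : J, dmap (biproduct.ι h j) f u = dmap (biproduct.ι h j) f v := by
      intro j
      apply (hc j ι f).1
      show homCoprodMap (h j) f _ = homCoprodMap (h j) f _
      rw [homCoprodMap_dmap, homCoprodMap_dmap]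
      show biproduct.ι h j ≫ homCoprodMap (⨁ h) f u
        = biproduct.ι h j ≫ homCoprodMap (⨁ h) f v
      rw [huv]
    calc u = ∑ j : J, dmap (biproduct.π h j) f (dmap (biproduct.ι h j) f u) := (key u).symm
      _ = ∑ j : J, dmap (biproduct.π h j) f (dmap (biproduct.ι h j) f v) := by
          simp_rw [hj]
      _ = v := key v
  · intro v
    choose u hu using fun j : J => (hc j ι f).2 (biproduct.ι h j ≫ v)
    refine ⟨∑ j : J, dmap (biproduct.π h j) f (u j), ?_⟩
    show homCoprodMap (⨁ h) f _ = v
    rw [map_sum]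
    simp_rw [homCoprodMap_dmap]
    have : ∀ j : J, homCoprodMap (h j) f (u j) = biproduct.ι h j ≫ v := hu
    simp_rw [this]
    simp only [← Category.assoc]
    rw [← Preadditive.sum_comp, biproduct.total, Category.id_comp]

/-- the natural transformation `yC ⟶ M` corresponding to `m ∈ M(C)` via Yoneda -/
noncomputable def yonedaNT (M : (Compacts D)ᵒᵖ ⥤ ModuleCat.{v} R) (hadd : M.Additive)
    (hlin : @Functor.Linear R _ _ _ _ _ _ _ _ _ M) (C : Compacts D) (m : M.obj (op C)) :
    (yc R D).obj C ⟶ M := by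
  haveI := hadd
  exact
  { app := fun B => ModuleCat.ofHom
      { toFun := fun g => M.map (Quiver.Hom.op (X := B.unop) (Y := C) (ObjectProperty.homMk g)) m
        map_add' := fun g g' => by
          have h : Quiver.Hom.op (X := B.unop) (Y := C) (ObjectProperty.homMk (g + g'))
              = Quiver.Hom.op (X := B.unop) (Y := C) (ObjectProperty.homMk g)
                + Quiver.Hom.op (X := B.unop) (Y := C) (ObjectProperty.homMk g') := rfl
          show M.map (Quiver.Hom.op (X := B.unop) (Y := C) (ObjectProperty.homMk (g + g'))) m = _
          rw [h, Functor.map_add]; rfl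
        map_smul' := fun r g => by
          have h : Quiver.Hom.op (X := B.unop) (Y := C) (ObjectProperty.homMk (r • g))
              = r • Quiver.Hom.op (X := B.unop) (Y := C) (ObjectProperty.homMk g) := rfl
          show M.map (Quiver.Hom.op (X := B.unop) (Y := C) (ObjectProperty.homMk (r • g))) m = _
          rw [h, hlin.map_smul]; rfl }
    naturality := fun B B' φ => by
      ext g
      show M.map (Quiver.Hom.op (X := B'.unop) (Y := C) (ObjectProperty.homMk (φ.unop.hom ≫ g))) m
        = M.map φ (M.map (Quiver.Hom.op (X := B.unop) (Y := C) (ObjectProperty.homMk g)) m)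
      have h : Quiver.Hom.op (X := B'.unop) (Y := C) (ObjectProperty.homMk (φ.unop.hom ≫ g))
          = Quiver.Hom.op (X := B.unop) (Y := C) (ObjectProperty.homMk g) ≫ φ := rfl
      rw [h, Functor.map_comp]
      rfl }

lemma yonedaNT_app (M : (Compacts D)ᵒᵖ ⥤ ModuleCat.{v} R) (hadd : M.Additive)
    (hlin : @Functor.Linear R _ _ _ _ _ _ _ _ _ M) (C : Compacts D) (m : M.obj (op C))
    (B : Compacts D) (g : B ⟶ C) :
    (yonedaNT R M hadd hlin C m).app (op B) g.hom = M.map g.op m := rfl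

end Aux

/-!
Statement 18.
Let `D` be a compactly generated `R`-linear triangulated category, `M` a `D^c`-module and
`G` a compact object such that `M(G)` is a finitely generated `R`-module.  Then there
exist a compact object `D₀` and a natural transformation `yD₀ → M` inducing a surjection
`D(G, D₀) → M(G)`.
-/
theorem exists_epi_onto_MG
    (hcg : CompactlyGenerated D)
    (M : (Compacts D)ᵒᵖ ⥤ ModuleCat.{v} R) (hadd : M.Additive)
    (hlin : @Functor.Linear R _ _ _ _ _ _ _ _ _ M)
    (G : Compacts D) (hfin : Module.Finite R (M.obj (op G))) :
    ∃ (D₀ : Compacts D) (α : (yc R D).obj D₀ ⟶ M),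
      Function.Surjective (α.app (op G)) := by
  classical
  haveI := hadd
  obtain ⟨S, hS⟩ := hfin.fg_top
  set n := S.card with hn
  let gs : Fin n → M.obj (op G) := fun i => ((S.equivFin.symm i : ↥S) : M.obj (op G))
  let hobj : Fin n → D := fun _ => G.obj
  have hcomp : IsCompactObj (⨁ hobj) := isCompactObj_biproduct hobj (fun _ => G.2)
  let D₀ : Compacts D := ⟨⨁ hobj, hcomp⟩
  let pr : ∀ _ : Fin n, (D₀ ⟶ G) := fun i => ObjectProperty.homMk (biproduct.π hobj i)
  let inc : ∀ _ : Fin n, (G ⟶ D₀) := fun i => ObjectProperty.homMk (biproduct.ι hobj i)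
  let m : M.obj (op D₀) := ∑ i : Fin n, M.map ((pr i).op) (gs i)
  let α := yonedaNT R M hadd hlin D₀ m
  have hval : ∀ i : Fin n, α.app (op G) (inc i).hom = gs i := by
    intro i
    rw [show (α.app (op G) (inc i).hom : M.obj (op G)) = M.map ((inc i).op) m from rfl]
    rw [show m = ∑ j : Fin n, M.map ((pr j).op) (gs j) from rfl, map_sum]
    have hterm : ∀ j : Fin n, M.map ((inc i).op) (M.map ((pr j).op) (gs j))
        = M.map ((inc i ≫ pr j).op) (gs j) := by
      intro j
      rw [show ((inc i ≫ pr j).op : op G ⟶ op G) = (pr j).op ≫ (inc i).op from rfl,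
        Functor.map_comp]
      rfl
    rw [Finset.sum_congr rfl (fun j _ => hterm j)]
    rw [Finset.sum_eq_single i]
    · have h1 : inc i ≫ pr i = 𝟙 G := ObjectProperty.hom_ext (h := biproduct.ι_π_self hobj i)
      rw [h1]
      rw [show ((𝟙 G : G ⟶ G).op : op G ⟶ op G) = 𝟙 (op G) from rfl, CategoryTheory.Functor.map_id]
      rfl
    · intro j _ hji
      have h0 : inc i ≫ pr j = (0 : G ⟶ G) := ObjectProperty.hom_ext (h := biproduct.ι_π_ne hobj (Ne.symm hji))
      rw [h0]
      rw [show ((0 : G ⟶ G).op : op G ⟶ op G) = 0 from rfl, Functor.map_zero]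
      rfl
    · intro hni
      exact absurd (Finset.mem_univ i) hni
  refine ⟨D₀, α, ?_⟩
  rw [← LinearMap.range_eq_top, ← top_le_iff, ← hS, Submodule.span_le]
  intro x hx
  have hxS : x ∈ S := hx
  refine LinearMap.mem_range.mpr ⟨(inc (S.equivFin ⟨x, hxS⟩)).hom, ?_⟩
  rw [hval]
  show ((S.equivFin.symm (S.equivFin ⟨x, hxS⟩) : ↥S) : M.obj (op G)) = x
  rw [Equiv.symm_apply_apply]

end Paper
end
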